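/- Let C ∈ (-1, 0), let b, b̃ : ℕ → ℝ be finitely supported with 1 + Σ_{k∈ℕ} b_k - Σ_{k∈ℕ} b̃_k = 0 and D := 2 + Σ_{k∈ℕ} b_k + (1/C)·Σ_{k∈ℕ} k·(b_k - b̃_k) ≠ 0, and define h(z) = z^2 - z·Σ_{k∈ℕ} b_k·κ_s(z)^k - Σ_{k∈ℕ} b̃_k·κ_s(z)^k with κ_s(z) = (1 - z^2 + √(z^4 + 2(2C^2-1)z^2 + 1))/(2Cz) (principal complex square root). Then h has a simple zero at z = -1, and (z+1)/h(z) tends to -1/D as z → -1 (z ≠ -1); equivalently, the residue at z = -1 of the function g(z) = (2πi)^{-1}/h(z) satisfies 2πi·Res_{-1}[g] = -1/D. -/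

import Mathlib

open Real Complex Filter Topology

/-- For `C ∈ (-1,0)` and finitely supported `b, b̃ : ℕ → ℝ` with
`1 + Σ b_k - Σ b̃_k = 0` and `D := 2 + Σ b_k + (1/C)·Σ k(b_k - b̃_k) ≠ 0`, the function
`h(z) = z² - z·Σ_k b_k κ_s(z)^k - Σ_k b̃_k κ_s(z)^k` has a simple zero at `z = -1`
(i.e. `h(-1) = 0` and `h'(-1) ≠ 0`), and `(z+1)/h(z) → -1/D` as `z → -1`, `z ≠ -1`;
equivalently `2πi·Res₋₁[g] = -1/D` for `g = (2πi)⁻¹/h`. -/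
theorem unstable_boundary_residue (C : ℝ) (hC : C ∈ Set.Ioo (-1 : ℝ) 0)
    (b btil : ℕ →₀ ℝ)
    (hzero : 1 + (b.sum fun _ bk => bk) - (btil.sum fun _ bk => bk) = 0)
    (hD : 2 + (b.sum fun _ bk => bk)
      + (1 / C) * ((b.sum fun k bk => (k : ℝ) * bk) - (btil.sum fun k bk => (k : ℝ) * bk)) ≠ 0) :
    let D : ℝ := 2 + (b.sum fun _ bk => bk)
      + (1 / C) * ((b.sum fun k bk => (k : ℝ) * bk) - (btil.sum fun k bk => (k : ℝ) * bk))
    let ks : ℂ → ℂ := fun z =>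
      (1 - z ^ 2 + (z ^ 4 + 2 * (2 * (C : ℂ) ^ 2 - 1) * z ^ 2 + 1) ^ ((1 : ℂ) / 2)) /
        (2 * (C : ℂ) * z)
    let h : ℂ → ℂ := fun z =>
      z ^ 2 - z * (b.sum fun k bk => (bk : ℂ) * ks z ^ k)
        - (btil.sum fun k bk => (bk : ℂ) * ks z ^ k)
    h (-1) = 0 ∧ deriv h (-1) ≠ 0 ∧
    Tendsto (fun z : ℂ => (z + 1) / h z) (𝓝[≠] (-1 : ℂ)) (𝓝 (-1 / (D : ℂ))) := by
  obtain ⟨hC1, hC0⟩ := hC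
  intro D ks h
  have hCne : C ≠ 0 := ne_of_lt hC0
  have hcne : (C:ℂ) ≠ 0 := by exact_mod_cast hCne
  -- the inner polynomial at -1
  have hf1 : ((-1:ℂ))^4 + 2*(2*(C:ℂ)^2 - 1)*(-1:ℂ)^2 + 1 = 4*(C:ℂ)^2 := by ring
  -- square root values
  have hval : ((4*(C:ℂ)^2 : ℂ)) ^ ((1:ℂ)/2) = -2*(C:ℂ) := by
    have h4 : (0:ℝ) ≤ 4*C^2 := by positivity
    have hsq : (4*C^2 : ℝ) ^ ((1:ℝ)/2) = -2*C := by
      rw [← Real.sqrt_eq_rpow, show (4*C^2 : ℝ) = (-2*C)^2 by ring]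
      exact Real.sqrt_sq (by nlinarith)
    calc (4*(C:ℂ)^2 : ℂ) ^ ((1:ℂ)/2) = ((4*C^2:ℝ):ℂ) ^ (((1:ℝ)/2 : ℝ):ℂ) := by push_cast; norm_num
      _ = (((4*C^2:ℝ) ^ ((1:ℝ)/2) : ℝ):ℂ) := (Complex.ofReal_cpow h4 _).symm
      _ = -2*(C:ℂ) := by rw [hsq]; push_cast; ring
  have hvalneg : ((4*(C:ℂ)^2 : ℂ)) ^ ((1:ℂ)/2 - 1) = (-2*(C:ℂ))⁻¹ := by
    rw [show ((1:ℂ)/2 - 1) = -((1:ℂ)/2) by ring, Complex.cpow_neg, hval]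
  -- derivative of inner polynomial
  have hf : HasDerivAt (fun z : ℂ => z^4 + 2*(2*(C:ℂ)^2-1)*z^2 + 1) (-8*(C:ℂ)^2) (-1) := by
    have h1 := hasDerivAt_pow 4 (-1 : ℂ)
    have h2 := (hasDerivAt_pow 2 (-1 : ℂ)).const_mul (2*(2*(C:ℂ)^2-1))
    have h3 := (h1.add h2).add_const 1
    refine h3.congr_deriv ?_
    norm_num
    ring
  -- derivative of square root term
  have hs : HasDerivAt (fun z : ℂ => (z^4 + 2*(2*(C:ℂ)^2-1)*z^2 + 1) ^ ((1:ℂ)/2))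
      (2*(C:ℂ)) (-1) := by
    have hsp : ((-1:ℂ))^4 + 2*(2*(C:ℂ)^2 - 1)*(-1:ℂ)^2 + 1 ∈ Complex.slitPlane := by
      rw [hf1, show (4*(C:ℂ)^2 : ℂ) = ((4*C^2:ℝ):ℂ) by push_cast; ring,
        Complex.ofReal_mem_slitPlane]
      positivity
    have := hf.cpow_const (c := (1:ℂ)/2) hsp
    convert this using 1
    rw [hf1, hvalneg]
    field_simp
    ring
  -- derivative of ks
  have hksd : HasDerivAt ks (-(C:ℂ)⁻¹) (-1) := by
    have hnum : HasDerivAt (fun z : ℂ => 1 - z^2 + (z^4 + 2*(2*(C:ℂ)^2-1)*z^2 + 1) ^ ((1:ℂ)/2))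
        (2 + 2*(C:ℂ)) (-1) := by
      have h1 := ((hasDerivAt_pow 2 (-1:ℂ)).const_sub 1).add hs
      refine h1.congr_deriv ?_
      norm_num
    have hden : HasDerivAt (fun z : ℂ => 2*(C:ℂ)*z) (2*(C:ℂ)) (-1) := by
      simpa using (hasDerivAt_id (-1:ℂ)).const_mul (2*(C:ℂ))
    have hdnz : 2*(C:ℂ)*(-1:ℂ) ≠ 0 := by simp [hcne]
    have := hnum.div hden hdnz
    refine this.congr_deriv ?_
    rw [hf1, hval]
    field_simp
    ring
  have hks1 : ks (-1) = 1 := by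
    simp only [ks]
    rw [hf1, hval]
    field_simp
    ring
  -- sums as finset sums and their derivatives
  have hderivSum : ∀ (v : ℕ →₀ ℝ), HasDerivAt (fun z => v.sum fun k bk => (bk:ℂ) * ks z ^ k)
      (-(C:ℂ)⁻¹ * ((v.sum fun k bk => (k:ℝ) * bk : ℝ) : ℂ)) (-1) := by
    intro v
    have H := HasDerivAt.fun_sum (u := v.support)
      (A := fun k z => (v k : ℂ) * ks z ^ k)
      (A' := fun k => (v k : ℂ) * ((k:ℂ) * ks (-1) ^ (k-1) * (-(C:ℂ)⁻¹)))
      (fun k _ => (hksd.pow k).const_mul ((v k : ℂ)))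
    have : HasDerivAt (fun z => v.sum fun k bk => (bk:ℂ) * ks z ^ k)
        (∑ k ∈ v.support, (v k : ℂ) * ((k:ℂ) * ks (-1) ^ (k-1) * (-(C:ℂ)⁻¹))) (-1) := H
    convert this using 1
    rw [Finsupp.sum]
    push_cast
    rw [Finset.mul_sum]
    refine Finset.sum_congr rfl fun k _ => ?_
    rw [hks1]
    ring
  -- values at -1
  have hvalSum : ∀ (v : ℕ →₀ ℝ), (v.sum fun k bk => (bk:ℂ) * ks (-1) ^ k)
      = ((v.sum fun _ bk => bk : ℝ) : ℂ) := by
    intro v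
    rw [hks1, Finsupp.sum, Finsupp.sum]
    push_cast
    simp
  -- derivative of h
  set Sb : ℝ := b.sum fun _ bk => bk with hSb
  set St : ℝ := btil.sum fun _ bk => bk with hSt
  set Kb : ℝ := b.sum fun k bk => (k:ℝ) * bk with hKb
  set Kt : ℝ := btil.sum fun k bk => (k:ℝ) * bk with hKt
  have hDC : (D:ℂ) = 2 + (Sb:ℂ) + ((C:ℂ))⁻¹ * ((Kb:ℂ) - (Kt:ℂ)) := by
    simp only [D]
    push_cast
    ring
  have hh0 : h (-1) = 0 := by
    simp only [h]
    rw [hvalSum b, hvalSum btil]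
    have : ((1 + Sb - St : ℝ) : ℂ) = 0 := by exact_mod_cast congrArg (fun x : ℝ => (x:ℂ)) hzero
    push_cast at this ⊢
    linear_combination this
  have hhd : HasDerivAt h (-(D:ℂ)) (-1) := by
    have h1 := ((hasDerivAt_pow 2 (-1:ℂ)).sub
      ((hasDerivAt_id (-1:ℂ)).mul (hderivSum b))).sub (hderivSum btil)
    have h2 : HasDerivAt h
        ((2:ℂ)*(-1:ℂ)^1 - (1 * (b.sum fun k bk => (bk:ℂ) * ks (-1) ^ k)
          + (-1) * (-(C:ℂ)⁻¹ * ((Kb:ℝ) : ℂ))) - (-(C:ℂ)⁻¹ * ((Kt:ℝ) : ℂ))) (-1) := by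
      refine h1.congr_deriv ?_
      simp [hKb, hKt]
    convert h2 using 1
    rw [hvalSum b, hDC]
    field_simp
    ring
  have hDne : (D:ℂ) ≠ 0 := by exact_mod_cast hD
  refine ⟨hh0, ?_, ?_⟩
  · rw [hhd.deriv]
    simpa using hDne
  · have hslope := hasDerivAt_iff_tendsto_slope.mp hhd
    have hinv := hslope.inv₀ (by simpa using hDne)
    have heq : (fun z : ℂ => (slope h (-1) z)⁻¹) =ᶠ[𝓝[≠] (-1:ℂ)]
        (fun z : ℂ => (z + 1) / h z) := by
      filter_upwards [self_mem_nhdsWithin] with z hz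
      rw [slope_def_field, hh0, sub_zero, inv_div, sub_neg_eq_add]
    have := hinv.congr' heq
    convert this using 2
    rw [neg_div, one_div, inv_neg]
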